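/- Let $W^H$ be a fractional Brownian motion with $H \in (0,1)$ and $\alpha, \nu > 0$, $m \in \mathbb{R}$. The process $X_t = \nu \int_{-\infty}^{t} e^{-\alpha(t-s)} dW^H_s + m$ (pathwise Riemann-Stieltjes integral) satisfies the fractional Langevin equation $dX_t = -\alpha(X_t - m)\,dt + \nu\, dW^H_t$; equivalently, for all $t \ge 0$, $X_t = X_0 - \alpha \int_0^t (X_s - m)\, ds + \nu (W^H_t - W^H_0)$ almost surely. -/

import Mathlib

open MeasureTheory ProbabilityTheory Real Set Filter

def IsGaussianProcess {Ω : Type*} [MeasurableSpace Ω] (μ : Measure Ω)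
    (W : ℝ → Ω → ℝ) : Prop :=
  ∀ (n : ℕ) (t : Fin n → ℝ) (c : Fin n → ℝ), ∃ (m : ℝ) (v : NNReal),
    μ.map (fun ω => ∑ i, c i * W (t i) ω) = gaussianReal m v

def IsFBM {Ω : Type*} [MeasurableSpace Ω] (μ : Measure Ω) (H : ℝ)
    (W : ℝ → Ω → ℝ) : Prop :=
  (∀ t, Measurable (W t)) ∧
  IsGaussianProcess μ W ∧
  (∀ t, ∫ ω, W t ω ∂μ = 0) ∧
  (∀ t s, ∫ ω, W t ω * W s ω ∂μ =
    (|t| ^ (2 * H) + |s| ^ (2 * H) - |t - s| ^ (2 * H)) / 2)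

/-- The stationary fractional Ornstein-Uhlenbeck process
\`X_t = ν ∫_{-∞}^t e^{-α(t-s)} dW^H_s + m\`, where the pathwise
Riemann-Stieltjes integral against \`W^H\` is understood via integration by
parts: \`∫_{-∞}^t e^{-α(t-s)} dW^H_s = W^H_t - α ∫_{-∞}^t e^{-α(t-s)} W^H_s ds\`. -/
noncomputable def fOU {Ω : Type*} (W : ℝ → Ω → ℝ) (α ν m : ℝ)
    (t : ℝ) (ω : Ω) : ℝ :=
  ν * (W t ω - α * ∫ s in Iic t, Real.exp (-(α * (t - s))) * W s ω) + m

/-- Deterministic key lemma: for a continuous path `w` with the needed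
integrability, `Y t = ∫_{Iic t} e^{-α(t-s)} w s ds` satisfies
`Y t - Y 0 = ∫_0^t (w s - α Y s) ds`. -/
lemma fOU_key (α : ℝ) (w : ℝ → ℝ) (hc : Continuous w)
    (hi : ∀ t : ℝ, IntegrableOn (fun s => Real.exp (α * s) * w s) (Iic t)) (t : ℝ) :
    (∫ s in Iic t, Real.exp (-(α * (t - s))) * w s)
      - (∫ s in Iic (0 : ℝ), Real.exp (-(α * ((0 : ℝ) - s))) * w s)
      = ∫ s in (0 : ℝ)..t,
          (w s - α * ∫ u in Iic s, Real.exp (-(α * (s - u))) * w u) := by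
  set g : ℝ → ℝ := fun s => Real.exp (α * s) * w s with hg
  have hgc : Continuous g := (Real.continuous_exp.comp (continuous_const.mul continuous_id)).mul hc
  set F : ℝ → ℝ := fun x => ∫ s in Iic x, g s with hF
  set Y : ℝ → ℝ := fun x => Real.exp (-(α * x)) * F x with hYdef
  have hYeq : ∀ x : ℝ, (∫ s in Iic x, Real.exp (-(α * (x - s))) * w s) = Y x := by
    intro x
    have : ∀ s : ℝ, Real.exp (-(α * (x - s))) * w s = Real.exp (-(α * x)) * g s := by
      intro s
      rw [hg]
      rw [show -(α * (x - s)) = -(α * x) + α * s by ring, Real.exp_add]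
      ring
    simp only [this]
    rw [integral_const_mul]
  -- F x = F 0 + ∫ 0..x g
  have hFrep : ∀ x : ℝ, F x = F 0 + ∫ s in (0 : ℝ)..x, g s := by
    intro x
    have := intervalIntegral.integral_Iic_sub_Iic (f := g) (μ := volume) (a := (0 : ℝ)) (b := x) (hi 0) (hi x)
    simp only [hF]
    linarith [this]
  have hFderiv : ∀ x : ℝ, HasDerivAt F (g x) x := by
    intro x
    have h1 : HasDerivAt (fun u => ∫ s in (0 : ℝ)..u, g s) (g x) x :=
      intervalIntegral.integral_hasDerivAt_right (hgc.intervalIntegrable 0 x)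
        (hgc.stronglyMeasurableAtFilter _ _) hgc.continuousAt
    have : HasDerivAt (fun u => F 0 + ∫ s in (0 : ℝ)..u, g s) (g x) x :=
      (h1.const_add (F 0))
    exact this.congr_of_eventuallyEq (Filter.Eventually.of_forall fun u => (hFrep u))
  have hYderiv : ∀ x : ℝ, HasDerivAt Y (w x - α * Y x) x := by
    intro x
    have he : HasDerivAt (fun u => Real.exp (-(α * u))) (-α * Real.exp (-(α * x))) x := by
      have : HasDerivAt (fun u : ℝ => -(α * u)) (-α) x := by
        simpa using ((hasDerivAt_id x).const_mul α).fun_neg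
      simpa [mul_comm] using this.exp
    have := he.mul (hFderiv x)
    have hx : Real.exp (-(α * x)) * g x = w x := by
      rw [hg, ← mul_assoc, ← Real.exp_add]
      simp
    refine this.congr_deriv ?_
    rw [hYdef]
    simp only
    rw [hx]
    ring
  have hYcont : Continuous Y := by
    rw [continuous_iff_continuousAt]
    exact fun x => (hYderiv x).continuousAt
  have := intervalIntegral.integral_eq_sub_of_hasDerivAt
    (f := Y) (f' := fun s => w s - α * Y s) (a := (0 : ℝ)) (b := t)
    (fun x _ => hYderiv x)
    ((hc.sub (continuous_const.mul hYcont)).intervalIntegrable 0 t)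
  rw [hYeq t, hYeq 0, ← this]
  congr 1
  ext s
  rw [hYeq s]

/-- The fractional Ornstein-Uhlenbeck process satisfies the fractional
Langevin equation: `X_t = X_0 - α ∫_0^t (X_s - m) ds + ν (W^H_t - W^H_0)`
for all `t ≥ 0`, almost surely. -/
theorem fOU_solves_langevin
    {Ω : Type*} [MeasurableSpace Ω] (μ : Measure Ω) [IsProbabilityMeasure μ]
    (H : ℝ) (hH : H ∈ Set.Ioo (0 : ℝ) 1) (W : ℝ → Ω → ℝ) (hW : IsFBM μ H W)
    (α ν m : ℝ) (hα : 0 < α) (hν : 0 < ν)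
    (hpath : ∀ᵐ ω ∂μ, (Continuous fun s => W s ω) ∧
      ∀ t : ℝ, IntegrableOn (fun s => Real.exp (α * s) * W s ω) (Iic t)) :
    ∀ᵐ ω ∂μ, ∀ t : ℝ, 0 ≤ t →
      fOU W α ν m t ω
        = fOU W α ν m 0 ω - α * (∫ s in (0 : ℝ)..t, (fOU W α ν m s ω - m))
          + ν * (W t ω - W 0 ω) := by
  filter_upwards [hpath] with ω hω
  obtain ⟨hc, hi⟩ := hω
  intro t _
  have key := fOU_key α (fun s => W s ω) hc hi t
  have hint : (∫ s in (0 : ℝ)..t, (fOU W α ν m s ω - m))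
      = ν * ((∫ s in Iic t, Real.exp (-(α * (t - s))) * W s ω)
          - (∫ s in Iic (0 : ℝ), Real.exp (-(α * ((0 : ℝ) - s))) * W s ω)) := by
    have : (fun s => fOU W α ν m s ω - m)
        = fun s => ν * (W s ω - α * ∫ u in Iic s,
            Real.exp (-(α * (s - u))) * W u ω) := by
      funext s; simp [fOU]
    rw [this, intervalIntegral.integral_const_mul, ← key]
  rw [hint]
  simp only [fOU]
  ring
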